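/- Let f : ℝⁿ → ℝ be differentiable and β-smooth with β > 0, suppose f attains its infimum f* = inf f and its set of minimizers X* = {x : f(x) = f*} is nonempty, and suppose f satisfies the Polyak–Łojasiewicz (PL) condition with constant μ > 0, i.e., (1/2)‖∇f(x)‖² ≥ μ(f(x) − f*) for every x ∈ ℝⁿ. Then for every x ∈ ℝⁿ, (μ/2)·dist(x, X*)² ≤ f(x) − f* ≤ (β/2)·dist(x, X*)², where dist(x, X*) = inf_{y ∈ X*} ‖x − y‖. -/

import Mathlib

open MeasureTheory
open scoped RealInnerProductSpace BigOperators

set_option maxHeartbeats 1000000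

lemma descent_lemma {F : Type*} [NormedAddCommGroup F] [InnerProductSpace ℝ F] [CompleteSpace F]
    {f : F → ℝ} {β : ℝ} (hβ : 0 ≤ β) (hdiff : Differentiable ℝ f)
    (hsmooth : ∀ u v : F, ‖gradient f u - gradient f v‖ ≤ β * ‖u - v‖) (x y : F) :
    f y ≤ f x + ⟪gradient f x, y - x⟫ + β / 2 * ‖y - x‖ ^ 2 := by
  set K : ℝ := β / 2 * ‖y - x‖ ^ 2 with hK
  set ip : ℝ := ⟪gradient f x, y - x⟫ with hip
  set c : ℝ → F := fun t => x + t • (y - x) with hc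
  set g : ℝ → ℝ := fun t => f (c t) - t * ip - t ^ 2 * K with hgdef
  have hcder : ∀ t : ℝ, HasDerivAt c (y - x) t := by
    intro t
    simpa [hc] using ((hasDerivAt_id t).smul_const (y - x)).const_add x
  have hfc : ∀ t : ℝ, HasDerivAt (fun s => f (c s)) ⟪gradient f (c t), y - x⟫ t := by
    intro t
    have h1 := ((hdiff (c t)).hasGradientAt.hasFDerivAt).comp_hasDerivAt t (hcder t)
    exact h1
  have hgder : ∀ t : ℝ, HasDerivAt g (⟪gradient f (c t), y - x⟫ - ip - 2 * t * K) t := by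
    intro t
    have h2 : HasDerivAt (fun s : ℝ => s * ip) ip t := by
      simpa using (hasDerivAt_id t).mul_const ip
    have h3 : HasDerivAt (fun s : ℝ => s ^ 2 * K) (2 * t * K) t := by
      simpa using (hasDerivAt_pow 2 t).mul_const K
    exact ((hfc t).sub h2).sub h3
  have hnonpos : ∀ t ∈ Set.Ioo (0:ℝ) 1, deriv g t ≤ 0 := by
    intro t ht
    rw [(hgder t).deriv]
    have h4 : ⟪gradient f (c t) - gradient f x, y - x⟫ ≤ ‖gradient f (c t) - gradient f x‖ * ‖y - x‖ :=
      real_inner_le_norm _ _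
    have h5 : ‖gradient f (c t) - gradient f x‖ ≤ β * (t * ‖y - x‖) := by
      have := hsmooth (c t) x
      have hct : c t - x = t • (y - x) := by simp [hc]
      rw [hct] at this
      simpa [norm_smul, abs_of_pos ht.1, mul_assoc] using this
    have h6 : ⟪gradient f (c t) - gradient f x, y - x⟫ ≤ β * t * ‖y - x‖ ^ 2 := by
      calc ⟪gradient f (c t) - gradient f x, y - x⟫ ≤ ‖gradient f (c t) - gradient f x‖ * ‖y - x‖ := h4
        _ ≤ β * (t * ‖y - x‖) * ‖y - x‖ := by
            apply mul_le_mul_of_nonneg_right h5 (norm_nonneg _)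
        _ = β * t * ‖y - x‖ ^ 2 := by ring
    rw [inner_sub_left] at h6
    simp only [hK]
    nlinarith [h6]
  have hanti : AntitoneOn g (Set.Icc (0:ℝ) 1) := by
    apply antitoneOn_of_deriv_nonpos (convex_Icc 0 1)
    · have hcont : Continuous g := by
        have hcc : Continuous c := continuous_const.add (continuous_id.smul continuous_const)
        exact ((hdiff.continuous.comp hcc).sub (continuous_id.mul continuous_const)).sub
          ((continuous_pow 2).mul continuous_const)
      exact hcont.continuousOn
    · intro t ht
      exact (hgder t).differentiableAt.differentiableWithinAt
    · intro t ht
      rw [interior_Icc] at ht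
      exact hnonpos t ht
  have h01 : g 1 ≤ g 0 := hanti (by norm_num) (by norm_num) (by norm_num)
  have hc0 : c 0 = x := by simp [hc]
  have hc1 : c 1 = y := by simp [hc]
  simp only [hgdef, hc0, hc1, one_pow, one_mul, pow_two] at h01
  simp only [hK, hip] at h01 ⊢
  nlinarith [h01]

lemma gradient_eq_zero_of_isMin {F : Type*} [NormedAddCommGroup F] [InnerProductSpace ℝ F]
    [CompleteSpace F] {f : F → ℝ} {y : F} (h : ∀ z, f y ≤ f z) : gradient f y = 0 := by
  have hloc : IsLocalMin f y := Filter.Eventually.of_forall h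
  show (InnerProductSpace.toDual ℝ F).symm (fderiv ℝ f y) = 0
  rw [hloc.fderiv_eq_zero, map_zero]

lemma key_bound {F : Type*} [NormedAddCommGroup F] [InnerProductSpace ℝ F] [CompleteSpace F]
    (β μ : ℝ) (hβ : 0 < β) (hμ : 0 < μ) {f : F → ℝ}
    (hdiff : Differentiable ℝ f)
    (hsmooth : ∀ u v : F, ‖gradient f u - gradient f v‖ ≤ β * ‖u - v‖)
    (fs : ℝ) (hlb : ∀ x, fs ≤ f x)
    (hPL : ∀ x, μ * (f x - fs) ≤ (1 / 2) * ‖gradient f x‖ ^ 2)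
    (x : F) {h : ℝ} (hh0 : 0 < h) (hh1 : h ≤ 1 / β) :
    Metric.infDist x {y | f y = fs} ≤ Real.sqrt (2 * (f x - fs) / μ) / (1 - β * h / 2) := by
  have hβh : β * h ≤ 1 := by
    rw [div_eq_mul_inv, one_mul] at hh1
    calc β * h ≤ β * β⁻¹ := by exact mul_le_mul_of_nonneg_left hh1 hβ.le
      _ = 1 := mul_inv_cancel₀ hβ.ne'
  have hfac : (0:ℝ) < 1 - β * h / 2 := by nlinarith
  set a : ℝ := h * (1 - β * h / 2) with ha_def
  have ha : 0 < a := mul_pos hh0 hfac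
  -- the gradient descent sequence
  set X : ℕ → F := fun k => Nat.rec x (fun _ p => p - h • gradient f p) k with hXdef
  have hX0 : X 0 = x := rfl
  have hXs : ∀ k, X (k + 1) = X k - h • gradient f (X k) := fun k => rfl
  set ε : ℕ → ℝ := fun k => f (X k) - fs with hεdef
  set δ : ℕ → ℝ := fun k => Real.sqrt (ε k) with hδdef
  have hε0 : ∀ k, 0 ≤ ε k := fun k => sub_nonneg.2 (hlb _)
  have hδ0 : ∀ k, 0 ≤ δ k := fun k => Real.sqrt_nonneg _
  have hδsq : ∀ k, δ k ^ 2 = ε k := fun k => Real.sq_sqrt (hε0 k)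
  -- descent step
  have hstep : ∀ k, ε (k + 1) ≤ ε k - a * ‖gradient f (X k)‖ ^ 2 := by
    intro k
    have hd := descent_lemma hβ.le hdiff hsmooth (X k) (X (k + 1))
    have hsub : X (k + 1) - X k = (-h) • gradient f (X k) := by
      rw [hXs k]; module
    rw [hsub] at hd
    rw [real_inner_smul_right, real_inner_self_eq_norm_sq, norm_smul] at hd
    simp only [Real.norm_eq_abs, abs_neg, abs_of_pos hh0] at hd
    simp only [hεdef, ha_def]
    nlinarith [hd]
  have hPLk : ∀ k, 2 * μ * ε k ≤ ‖gradient f (X k)‖ ^ 2 := by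
    intro k
    have := hPL (X k)
    simp only [hεdef]
    linarith
  have hεdec : ∀ k, ε (k + 1) ≤ ε k := by
    intro k
    have := hstep k
    nlinarith [sq_nonneg ‖gradient f (X k)‖, ha]
  have hδdec : ∀ k, δ (k + 1) ≤ δ k := fun k => Real.sqrt_le_sqrt (hεdec k)
  have hδanti : Antitone δ := antitone_nat_of_succ_le hδdec
  -- geometric decay
  set q : ℝ := max (1 - 2 * μ * a) 0 with hq_def
  have hq0 : 0 ≤ q := le_max_right _ _
  have hq1 : q < 1 := by
    apply max_lt _ one_pos
    nlinarith [mul_pos hμ ha]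
  have hgeo : ∀ k, ε k ≤ q ^ k * ε 0 := by
    intro k
    induction k with
    | zero => simp
    | succ k ih =>
      have h1 : ε (k + 1) ≤ (1 - 2 * μ * a) * ε k := by
        have := hstep k
        have := hPLk k
        nlinarith [ha]
      have h2 : ε (k + 1) ≤ q * ε k := by
        rcases le_or_gt 0 (1 - 2 * μ * a) with hc | hc
        · calc ε (k + 1) ≤ (1 - 2 * μ * a) * ε k := h1
            _ ≤ q * ε k := mul_le_mul_of_nonneg_right (le_max_left _ _) (hε0 k)
        · calc ε (k + 1) ≤ (1 - 2 * μ * a) * ε k := h1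
            _ ≤ 0 := mul_nonpos_of_nonpos_of_nonneg hc.le (hε0 k)
            _ ≤ q * ε k := mul_nonneg hq0 (hε0 k)
      calc ε (k + 1) ≤ q * ε k := h2
        _ ≤ q * (q ^ k * ε 0) := mul_le_mul_of_nonneg_left ih hq0
        _ = q ^ (k + 1) * ε 0 := by ring
  -- the path-length constant
  set s : ℝ := Real.sqrt (2 * μ) with hs_def
  have hs : 0 < s := Real.sqrt_pos.2 (by positivity)
  set C : ℝ := 2 * h / (a * s) with hC_def
  have hC0 : 0 ≤ C := by positivity
  -- per-step distance bound
  have hdist_step : ∀ k, dist (X (k + 1)) (X k) ≤ C * (δ k - δ (k + 1)) := by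
    intro k
    set G : ℝ := ‖gradient f (X k)‖ with hG_def
    have hdd : dist (X (k + 1)) (X k) = h * G := by
      rw [dist_eq_norm, hXs k]
      simp only [sub_sub_cancel_left, norm_neg, norm_smul, Real.norm_eq_abs, abs_of_pos hh0]
      rfl
    rw [hdd]
    rcases eq_or_lt_of_le (hε0 k) with hek | hek
    · -- ε k = 0 : X k is a global minimizer
      have hmin : ∀ z, f (X k) ≤ f z := by
        intro z
        have : f (X k) = fs := by simp only [hεdef] at hek; linarith
        rw [this]; exact hlb z
      have hG0 : G = 0 := by
        rw [hG_def, gradient_eq_zero_of_isMin hmin, norm_zero]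
      have hε1 : ε (k + 1) = 0 := le_antisymm ((hεdec k).trans hek.symm.le) (hε0 (k + 1))
      have : δ k = 0 := by rw [hδdef]; simp [← hek]
      have h2 : δ (k + 1) = 0 := by rw [hδdef]; simp [hε1]
      rw [hG0, this, h2]
      simp
    · -- ε k > 0
      have hδk : 0 < δ k := Real.sqrt_pos.2 hek
      have hGlb : s * δ k ≤ G := by
        have h1 : (s * δ k) ^ 2 = 2 * μ * ε k := by
          rw [mul_pow, hδsq, hs_def, Real.sq_sqrt (by positivity : (0:ℝ) ≤ 2 * μ)]
        have h2 : (s * δ k) ^ 2 ≤ G ^ 2 := by rw [h1]; exact hPLk k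
        have h3 : 0 ≤ s * δ k := by positivity
        have h4 := Real.sqrt_le_sqrt h2
        rwa [Real.sqrt_sq h3, Real.sqrt_sq (norm_nonneg _)] at h4
      have hG0 : 0 < G := lt_of_lt_of_le (by positivity) hGlb
      have hd : 0 ≤ δ k - δ (k + 1) := sub_nonneg.2 (hδdec k)
      have key1 : ε k - ε (k + 1) ≤ 2 * δ k * (δ k - δ (k + 1)) := by
        nlinarith [hδsq k, hδsq (k + 1), sq_nonneg (δ k - δ (k + 1))]
      have key2 : a * G ^ 2 ≤ ε k - ε (k + 1) := by linarith [hstep k]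
      have key3 : a * G * (s * δ k) ≤ 2 * δ k * (δ k - δ (k + 1)) := by
        calc a * G * (s * δ k) ≤ a * G * G := by
              exact mul_le_mul_of_nonneg_left hGlb (by positivity)
          _ = a * G ^ 2 := by ring
          _ ≤ ε k - ε (k + 1) := key2
          _ ≤ 2 * δ k * (δ k - δ (k + 1)) := key1
      have key4 : a * G * s ≤ 2 * (δ k - δ (k + 1)) := by
        apply le_of_mul_le_mul_right _ hδk
        nlinarith [key3]
      rw [hC_def, div_mul_eq_mul_div, le_div_iff₀ (by positivity : (0:ℝ) < a * s)]
      linarith [mul_le_mul_of_nonneg_left key4 hh0.le]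
  -- telescoping bound
  have htel : ∀ m k, dist (X m) (X (m + k)) ≤ C * (δ m - δ (m + k)) := by
    intro m k
    induction k with
    | zero => simp
    | succ k ih =>
      calc dist (X m) (X (m + (k + 1)))
          ≤ dist (X m) (X (m + k)) + dist (X (m + k)) (X (m + k + 1)) := dist_triangle _ _ _
        _ ≤ C * (δ m - δ (m + k)) + C * (δ (m + k) - δ (m + k + 1)) := by
            have := hdist_step (m + k)
            rw [dist_comm] at this
            exact add_le_add ih this
        _ = C * (δ m - δ (m + (k + 1))) := by rw [show m + (k + 1) = m + k + 1 from rfl]; ring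
  -- ε and δ tend to zero
  have hεlim : Filter.Tendsto ε Filter.atTop (nhds 0) := by
    apply squeeze_zero hε0 hgeo
    have h1 : Filter.Tendsto (fun k : ℕ => q ^ k) Filter.atTop (nhds 0) :=
      tendsto_pow_atTop_nhds_zero_of_lt_one hq0 hq1
    simpa using h1.mul_const (ε 0)
  have hδlim : Filter.Tendsto δ Filter.atTop (nhds 0) := by
    have h1 := (Real.continuous_sqrt.tendsto 0).comp hεlim
    simpa [hδdef, Function.comp_def] using h1
  -- Cauchy sequence
  have hcauchy : CauchySeq X := by
    apply cauchySeq_of_le_tendsto_0 (fun N => C * δ N)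
    · intro m k N hm hk
      rcases le_total m k with hmk | hmk
      · obtain ⟨j, rfl⟩ := Nat.exists_eq_add_of_le hmk
        calc dist (X m) (X (m + j)) ≤ C * (δ m - δ (m + j)) := htel m j
          _ ≤ C * δ m := by nlinarith [hδ0 (m + j), hC0]
          _ ≤ C * δ N := mul_le_mul_of_nonneg_left (hδanti hm) hC0
      · obtain ⟨j, rfl⟩ := Nat.exists_eq_add_of_le hmk
        rw [dist_comm]
        calc dist (X k) (X (k + j)) ≤ C * (δ k - δ (k + j)) := htel k j
          _ ≤ C * δ k := by nlinarith [hδ0 (k + j), hC0]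
          _ ≤ C * δ N := mul_le_mul_of_nonneg_left (hδanti hk) hC0
    · simpa using hδlim.const_mul C
  obtain ⟨z, hz⟩ := cauchySeq_tendsto_of_complete hcauchy
  -- the limit is a minimizer
  have hfz : f z = fs := by
    have h1 : Filter.Tendsto (fun k => f (X k)) Filter.atTop (nhds (f z)) :=
      (hdiff.continuous.tendsto z).comp hz
    have h2 : Filter.Tendsto (fun k => f (X k)) Filter.atTop (nhds fs) := by
      have h3 : Filter.Tendsto (fun k => ε k + fs) Filter.atTop (nhds (0 + fs)) :=
        hεlim.add_const fs
      simpa [hεdef] using h3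
    exact tendsto_nhds_unique h1 h2
  -- distance from x to z
  have hxz : dist x z ≤ C * δ 0 := by
    have h1 : Filter.Tendsto (fun k => dist (X 0) (X k)) Filter.atTop (nhds (dist (X 0) z)) :=
      Filter.Tendsto.dist tendsto_const_nhds hz
    rw [← hX0]
    apply le_of_tendsto h1
    apply Filter.Eventually.of_forall
    intro k
    calc dist (X 0) (X k) ≤ C * (δ 0 - δ (0 + k)) := by simpa using htel 0 k
      _ ≤ C * δ 0 := by nlinarith [hδ0 (0 + k), hC0]
  have hinf : Metric.infDist x {y | f y = fs} ≤ C * δ 0 :=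
    le_trans (Metric.infDist_le_dist_of_mem (by exact hfz)) hxz
  -- final algebra : C * δ 0 = √(2 ε₀ / μ) / (1 - β h / 2)
  have halg : C * δ 0 = Real.sqrt (2 * (f x - fs) / μ) / (1 - β * h / 2) := by
    have hε0x : ε 0 = f x - fs := by simp [hεdef, hX0]
    have hsqrt2 : Real.sqrt 2 * Real.sqrt 2 = 2 := Real.mul_self_sqrt (by norm_num)
    have hsμ : s = Real.sqrt 2 * Real.sqrt μ := by
      rw [hs_def, Real.sqrt_mul (by norm_num : (0:ℝ) ≤ 2)]
    have hμs : Real.sqrt μ ≠ 0 := ne_of_gt (Real.sqrt_pos.2 hμ)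
    have h2s : Real.sqrt 2 ≠ 0 := by positivity
    have hr : Real.sqrt (2 * (f x - fs) / μ) = Real.sqrt 2 * δ 0 / Real.sqrt μ := by
      rw [← hε0x, Real.sqrt_div (mul_nonneg (by norm_num) (hε0 0)),
        Real.sqrt_mul (by norm_num : (0:ℝ) ≤ 2) (ε 0)]
    have h2p : (0:ℝ) < Real.sqrt 2 := Real.sqrt_pos.2 (by norm_num)
    have hμp : (0:ℝ) < Real.sqrt μ := Real.sqrt_pos.2 hμ
    rw [hr, hC_def, ha_def, hsμ, div_mul_eq_mul_div, div_div,
      div_eq_div_iff (mul_pos (mul_pos hh0 hfac) (mul_pos h2p hμp)).ne'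
        (mul_pos hμp hfac).ne']
    linear_combination (h * δ 0 * Real.sqrt μ * (h * β / 2 - 1)) * hsqrt2
  rw [← halg]
  exact hinf

/-- **Two-sided bounds on losses under PL and smoothness.**
If `f : ℝⁿ → ℝ` is differentiable and `β`-smooth (`β > 0`), attains its infimum `fs`
(so its set of minimizers is nonempty), and satisfies the PL condition with constant
`μ > 0`, then for every `x`,
`(μ/2) dist(x, X*)² ≤ f x - fs ≤ (β/2) dist(x, X*)²` where `X* = {y | f y = fs}`. -/
theorem stmt1 {n : ℕ} (β μ : ℝ) (hβ : 0 < β) (hμ : 0 < μ)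
    (f : EuclideanSpace ℝ (Fin n) → ℝ)
    (hdiff : Differentiable ℝ f)
    (hsmooth : ∀ u v : EuclideanSpace ℝ (Fin n),
      ‖gradient f u - gradient f v‖ ≤ β * ‖u - v‖)
    (fs : ℝ) (hlb : ∀ x, fs ≤ f x) (hattain : ∃ x, f x = fs)
    (hPL : ∀ x, μ * (f x - fs) ≤ (1 / 2) * ‖gradient f x‖ ^ 2) :
    ∀ x : EuclideanSpace ℝ (Fin n),
      μ / 2 * (Metric.infDist x {y | f y = fs}) ^ 2 ≤ f x - fs ∧
      f x - fs ≤ β / 2 * (Metric.infDist x {y | f y = fs}) ^ 2 := by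
  intro x
  set S : Set (EuclideanSpace ℝ (Fin n)) := {y | f y = fs} with hS_def
  have hS : S.Nonempty := hattain
  set D : ℝ := Metric.infDist x S with hD_def
  have hD0 : 0 ≤ D := Metric.infDist_nonneg
  have hεnn : 0 ≤ f x - fs := sub_nonneg.2 (hlb x)
  constructor
  · -- lower bound : μ/2 * D² ≤ f x - fs
    set L : ℝ := Real.sqrt (2 * (f x - fs) / μ) with hL_def
    have hL0 : 0 ≤ L := Real.sqrt_nonneg _
    have hDL : D ≤ L := by
      by_contra hcon
      push_neg at hcon
      set η : ℝ := (D - L) / 2 with hη_def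
      have hη : 0 < η := by simp only [hη_def]; linarith
      set h : ℝ := min (1 / β) (2 * η / (β * (D + 1))) with hh_def
      have hh0 : 0 < h := lt_min (by positivity) (by positivity)
      have hh1 : h ≤ 1 / β := min_le_left _ _
      have hkey := key_bound β μ hβ hμ hdiff hsmooth fs hlb hPL x hh0 hh1
      have hβh : β * h ≤ 1 := by
        rw [div_eq_mul_inv, one_mul] at hh1
        calc β * h ≤ β * β⁻¹ := mul_le_mul_of_nonneg_left hh1 hβ.le
          _ = 1 := mul_inv_cancel₀ hβ.ne'
      have hfac : (0:ℝ) < 1 - β * h / 2 := by nlinarith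
      rw [← hD_def, ← hL_def, le_div_iff₀ hfac] at hkey
      have h2 : h ≤ 2 * η / (β * (D + 1)) := min_le_right _ _
      have h3 : h * (β * (D + 1)) ≤ 2 * η := by
        rw [← le_div_iff₀ (by positivity : (0:ℝ) < β * (D + 1))]
        exact h2
      have h4 : D * (β * h / 2) ≤ η := by nlinarith
      -- hkey : D * (1 - β*h/2) ≤ L, so D ≤ L + η < D
      have h5 : D ≤ L + η := by nlinarith
      simp only [hη_def] at h5
      linarith
    have hsq : D ^ 2 ≤ 2 * (f x - fs) / μ := by
      have h1 := pow_le_pow_left₀ hD0 hDL 2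
      rwa [hL_def, Real.sq_sqrt (by positivity)] at h1
    calc μ / 2 * D ^ 2 ≤ μ / 2 * (2 * (f x - fs) / μ) :=
          mul_le_mul_of_nonneg_left hsq (by positivity)
      _ = f x - fs := by field_simp
  · -- upper bound : f x - fs ≤ β/2 * D²
    have key : ∀ y ∈ S, Real.sqrt (2 * (f x - fs) / β) ≤ dist x y := by
      intro y hy
      have hyfs : f y = fs := hy
      have hmin : ∀ z, f y ≤ f z := fun z => hyfs ▸ hlb z
      have hgrad : gradient f y = 0 := gradient_eq_zero_of_isMin hmin
      have hd := descent_lemma hβ.le hdiff hsmooth y x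
      rw [hgrad, inner_zero_left, hyfs] at hd
      have h1 : 2 * (f x - fs) / β ≤ ‖x - y‖ ^ 2 := by
        rw [div_le_iff₀ hβ]
        nlinarith [hd]
      have h2 := Real.sqrt_le_sqrt h1
      rwa [Real.sqrt_sq (norm_nonneg _), ← dist_eq_norm] at h2
    have h2 : Real.sqrt (2 * (f x - fs) / β) ≤ D := by
      rw [hD_def, Metric.infDist_eq_iInf]
      have : Nonempty S := hS.to_subtype
      exact le_ciInf fun y => key y y.2
    have hsq : 2 * (f x - fs) / β ≤ D ^ 2 := by
      have h1 := pow_le_pow_left₀ (Real.sqrt_nonneg _) h2 2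
      rwa [Real.sq_sqrt (by positivity)] at h1
    rw [div_le_iff₀ hβ] at hsq
    nlinarith [hsq]
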